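/- Let E be a real inner product space, H : E → E a symmetric linear map (⟨H w₁, w₂⟩ = ⟨w₁, H w₂⟩ for all w₁, w₂), s ∈ E, u, v ∈ E, and let θ, R, g_x, g_h, G be real numbers. Assume: (a) ⟨H u, w⟩ = −⟨s, w⟩ for every w ∈ E; (b) ⟨s, u⟩ = −θ; (c) ⟨H v, v⟩ ≤ ⟨s, v⟩²; (d) θ ≥ 1; (e) |g_h − g_x| ≤ R with R ≥ 0; (f) G = ⟨s, u − v⟩ + g_x − g_h and G ≥ 0. Then ⟨H(v − u), v − u⟩ ≤ (G + θ + R)². (This is the bound D_t ≤ G_t^a + θ + R_g relating the Hessian distance to the approximate duality gap.) -/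
import Mathlib


open scoped RealInnerProductSpace

/-- The bound `D_t ≤ G_tᵃ + θ + R_g` (squared): under the standard barrier
identities for the Hessian `H` and gradient `s` of a 2-self-concordant
`θ`-logarithmically-homogeneous barrier, the squared Hessian distance
`⟨H(v-u), v-u⟩` is at most `(G + θ + R)²`. -/
theorem stmt_17 {E : Type*} [NormedAddCommGroup E] [InnerProductSpace ℝ E]
    (H : E →ₗ[ℝ] E) (hHsymm : ∀ w₁ w₂ : E, ⟪H w₁, w₂⟫ = ⟪w₁, H w₂⟫)
    (s u v : E) (θ R gx gh G : ℝ)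
    (ha : ∀ w : E, ⟪H u, w⟫ = -⟪s, w⟫)
    (hb : ⟪s, u⟫ = -θ)
    (hc : ⟪H v, v⟫ ≤ ⟪s, v⟫ ^ 2)
    (hd : 1 ≤ θ)
    (hR : 0 ≤ R) (he : |gh - gx| ≤ R)
    (hG : G = ⟪s, u - v⟫ + gx - gh) (hG0 : 0 ≤ G) :
    ⟪H (v - u), v - u⟫ ≤ (G + θ + R) ^ 2 := by
  have hvu : ⟪H v, u⟫ = -⟪s, v⟫ := by
    rw [hHsymm v u, real_inner_comm, ha v]
  have hexp : ⟪H (v - u), v - u⟫ = ⟪H v, v⟫ + 2 * ⟪s, v⟫ + θ := by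
    simp only [map_sub, inner_sub_left, inner_sub_right, hvu, ha v, ha u, hb]
    ring
  have hsu : ⟪s, u - v⟫ = -θ - ⟪s, v⟫ := by rw [inner_sub_right, hb]
  rw [hsu] at hG
  have h1 := abs_le.mp he
  rw [hexp]
  nlinarith [hc, sq_nonneg (gh - gx + R), sq_nonneg (⟪s, v⟫ + θ + G), mul_nonneg hR hG0, mul_nonneg hR (sub_nonneg.mpr hd), mul_nonneg hG0 (sub_nonneg.mpr hd)]
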